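/- For every integer l with 1 ≤ l ≤ m−1 and every x ∈ ℝ^{2m} with x ≠ 0, the l-fold iterated Laplacian of the function x ↦ log|x| satisfies Δ^l(log|x|) = K̃_{m,l} · |x|^{−2l}. -/

import Mathlib

open MeasureTheory Real
noncomputable section

/-- The Laplacian of `u : ℝ^n → ℝ` at `x`, as the sum of second partial derivatives. -/
def lap {n : ℕ} (u : EuclideanSpace ℝ (Fin n) → ℝ) (x : EuclideanSpace ℝ (Fin n)) : ℝ :=
  ∑ i : Fin n, fderiv ℝ (fun y => fderiv ℝ u y (EuclideanSpace.single i 1)) x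
    (EuclideanSpace.single i 1)

/-- The `l`-fold iterated Laplacian `Δ^l u`. -/
def iterLap {n : ℕ} (l : ℕ) (u : EuclideanSpace ℝ (Fin n) → ℝ) :
    EuclideanSpace ℝ (Fin n) → ℝ := lap^[l] u

/-- The Adams critical exponent `β* = 2^{2m} π^m m!`. -/
def betaStar (m : ℕ) : ℝ := 2^(2*m) * Real.pi^m * (Nat.factorial m : ℝ)

/-- `ω_{2m} = 2^{m+1} π^m / (2m−1)‼`, the volume of the unit sphere `S^{2m} ⊂ ℝ^{2m+1}`. -/
def omega2m (m : ℕ) : ℝ := 2^(m+1) * Real.pi^m / (Nat.doubleFactorial (2*m - 1) : ℝ)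

/-- The standard bubble `η₀(y) = −(m/β*) log(1 + |y|²/4)`. -/
def eta0 (m : ℕ) (y : EuclideanSpace ℝ (Fin (2*m))) : ℝ :=
  -((m : ℝ) / betaStar m) * Real.log (1 + ‖y‖^2 / 4)

/-- `K̃_{m,l} = (−1)^{l+1} 2^{2l−1} (l−1)! (m−1)! / (m−l−1)!`. -/
def Ktilde (m l : ℕ) : ℝ :=
  (-1)^(l+1) * 2^(2*l-1) * (Nat.factorial (l-1) : ℝ) * (Nat.factorial (m-1) : ℝ) /
    (Nat.factorial (m-l-1) : ℝ)

open Filter Topology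

lemma lap_congr {n : ℕ} {u v : EuclideanSpace ℝ (Fin n) → ℝ} {x : EuclideanSpace ℝ (Fin n)}
    (h : u =ᶠ[𝓝 x] v) : lap u x = lap v x := by
  unfold lap
  refine Finset.sum_congr rfl fun i _ => ?_
  have h2 : (fun y => fderiv ℝ u y (EuclideanSpace.single i 1)) =ᶠ[𝓝 x]
      (fun y => fderiv ℝ v y (EuclideanSpace.single i 1)) :=
    (Filter.EventuallyEq.fderiv (𝕜 := ℝ) h).mono fun y hy => by
      simp only [hy]
  rw [h2.fderiv_eq]

lemma sum_sq_eq_normSq {n : ℕ} (x : EuclideanSpace ℝ (Fin n)) :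
    ∑ i, x i ^ 2 = ‖x‖ ^ 2 := by
  rw [EuclideanSpace.norm_eq, Real.sq_sqrt (by positivity)]
  simp [sq_abs]

lemma lap_radial {n : ℕ} (F F' F'' : ℝ → ℝ)
    (h1 : ∀ t, 0 < t → HasDerivAt F (F' t) t)
    (h2 : ∀ t, 0 < t → HasDerivAt F' (F'' t) t)
    (x : EuclideanSpace ℝ (Fin n)) (hx : x ≠ 0) :
    lap (fun y => F (‖y‖ ^ 2)) x
      = 4 * ‖x‖ ^ 2 * F'' (‖x‖ ^ 2) + 2 * n * F' (‖x‖ ^ 2) := by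
  have hpos : ∀ y : EuclideanSpace ℝ (Fin n), y ≠ 0 → 0 < ‖y‖ ^ 2 := by
    intro y hy
    have : 0 < ‖y‖ := norm_pos_iff.mpr hy
    positivity
  have hD : ∀ y : EuclideanSpace ℝ (Fin n), y ≠ 0 →
      HasFDerivAt (fun z : EuclideanSpace ℝ (Fin n) => F (‖z‖ ^ 2))
        (F' (‖y‖ ^ 2) • ((2:ℕ) • innerSL ℝ y)) y := fun y hy =>
    (h1 _ (hpos y hy)).comp_hasFDerivAt y (hasStrictFDerivAt_norm_sq y).hasFDerivAt
  have hmem : {y : EuclideanSpace ℝ (Fin n) | y ≠ 0} ∈ 𝓝 x :=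
    isOpen_compl_singleton.mem_nhds hx
  have key : ∀ i : Fin n,
      fderiv ℝ (fun y => fderiv ℝ (fun z : EuclideanSpace ℝ (Fin n) => F (‖z‖^2)) y
          (EuclideanSpace.single i 1)) x (EuclideanSpace.single i 1)
        = 4 * (x i)^2 * F'' (‖x‖^2) + 2 * F' (‖x‖^2) := by
    intro i
    have hEq : (fun y => fderiv ℝ (fun z : EuclideanSpace ℝ (Fin n) => F (‖z‖^2)) y
          (EuclideanSpace.single i 1))
        =ᶠ[𝓝 x] (fun y => F' (‖y‖^2) * (2 * y i)) := by
      filter_upwards [hmem] with y hy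
      rw [(hD y hy).fderiv]
      simp [real_inner_comm, EuclideanSpace.inner_single_left, EuclideanSpace.inner_single_right]
    rw [hEq.fderiv_eq]
    have hA : HasFDerivAt (fun y : EuclideanSpace ℝ (Fin n) => F' (‖y‖^2))
        (F'' (‖x‖^2) • ((2:ℕ) • innerSL ℝ x)) x :=
      (h2 _ (hpos x hx)).comp_hasFDerivAt x (hasStrictFDerivAt_norm_sq x).hasFDerivAt
    have hB : HasFDerivAt (fun y : EuclideanSpace ℝ (Fin n) => 2 * y i)
        ((2:ℝ) • (EuclideanSpace.proj i : EuclideanSpace ℝ (Fin n) →L[ℝ] ℝ)) x :=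
      ((EuclideanSpace.proj i : EuclideanSpace ℝ (Fin n) →L[ℝ] ℝ).hasFDerivAt).const_mul 2
    have hmul : HasFDerivAt (fun y : EuclideanSpace ℝ (Fin n) => F' (‖y‖^2) * (2 * y i)) _ x :=
      hA.mul hB
    rw [hmul.fderiv]
    simp [real_inner_comm, EuclideanSpace.inner_single_left, EuclideanSpace.inner_single_right]
    ring
  rw [lap, Finset.sum_congr rfl fun i _ => key i, Finset.sum_add_distrib,
    Finset.sum_const, Finset.card_univ, Fintype.card_fin]
  have hsum : ∑ i, 4 * (x i)^2 * F'' (‖x‖^2) = 4 * ‖x‖^2 * F'' (‖x‖^2) := by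
    rw [← Finset.sum_mul, ← Finset.mul_sum, sum_sq_eq_normSq]
  rw [hsum]
  push_cast
  ring

lemma Ktilde_one (m : ℕ) (hm : 2 ≤ m) : Ktilde m 1 = 2 * ((m:ℝ) - 1) := by
  obtain ⟨b, rfl⟩ : ∃ b, m = b + 2 := ⟨m - 2, by omega⟩
  unfold Ktilde
  have e1 : b + 2 - 1 = b + 1 := by omega
  have e2 : b + 2 - 1 - 1 = b := by omega
  rw [e2, e1]
  have hb : (Nat.factorial b : ℝ) ≠ 0 := Nat.cast_ne_zero.mpr (Nat.factorial_pos b).ne'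
  rw [Nat.factorial_succ]
  norm_num [Nat.factorial]
  field_simp
  push_cast
  ring

lemma Ktilde_succ (m l : ℕ) (hm : 2 ≤ m) (hl : 1 ≤ l) (hlm : l + 1 ≤ m - 1) :
    Ktilde m (l+1) = -4 * (l:ℝ) * ((m:ℝ) - l - 1) * Ktilde m l := by
  obtain ⟨a, rfl⟩ : ∃ a, m = l + 2 + a := ⟨m - l - 2, by omega⟩
  obtain ⟨b, rfl⟩ : ∃ b, l = b + 1 := ⟨l - 1, by omega⟩
  unfold Ktilde
  have e1 : b + 1 + 1 - 1 = b + 1 := by omega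
  have e2 : 2 * (b + 1 + 1) - 1 = 2 * b + 3 := by omega
  have e3 : b + 1 + 2 + a - 1 = b + 2 + a := by omega
  have e4 : b + 1 + 2 + a - (b + 1 + 1) - 1 = a := by omega
  have e5 : b + 1 - 1 = b := by omega
  have e6 : 2 * (b + 1) - 1 = 2 * b + 1 := by omega
  have e7 : b + 1 + 2 + a - (b + 1) - 1 = a + 1 := by omega
  rw [e1, e2, e3, e4, e5, e6, e7]
  have ha : (Nat.factorial a : ℝ) ≠ 0 := Nat.cast_ne_zero.mpr (Nat.factorial_pos a).ne'
  have ha1 : (Nat.factorial (a+1) : ℝ) ≠ 0 := Nat.cast_ne_zero.mpr (Nat.factorial_pos _).ne'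
  rw [Nat.factorial_succ b, Nat.factorial_succ a]
  field_simp
  push_cast
  ring

lemma main_aux (m : ℕ) (hm : 2 ≤ m) (l : ℕ) (hl1 : 1 ≤ l) :
    l ≤ m - 1 → ∀ x : EuclideanSpace ℝ (Fin (2*m)), x ≠ 0 →
      iterLap l (fun y => Real.log ‖y‖) x = Ktilde m l * (‖x‖^2 : ℝ) ^ (-(l:ℤ)) := by
  induction l, hl1 using Nat.le_induction with
  | base =>
    intro _ x hx
    have hq : (0:ℝ) < ‖x‖^2 := by
      have : 0 < ‖x‖ := norm_pos_iff.mpr hx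
      positivity
    have hu : (fun y : EuclideanSpace ℝ (Fin (2*m)) => Real.log ‖y‖)
        = fun y => Real.log (‖y‖^2) / 2 := funext fun y => by
      rw [Real.log_pow]; push_cast; ring
    have : iterLap 1 (fun y : EuclideanSpace ℝ (Fin (2*m)) => Real.log ‖y‖) x
        = lap (fun y : EuclideanSpace ℝ (Fin (2*m)) => Real.log ‖y‖) x := by
      rw [iterLap, Function.iterate_one]
    rw [this, hu,
      lap_radial (fun t => Real.log t / 2) (fun t => t⁻¹ / 2) (fun t => -(t^2)⁻¹ / 2)
        (fun t ht => (Real.hasDerivAt_log ht.ne').div_const 2)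
        (fun t ht => (hasDerivAt_inv ht.ne').div_const 2) x hx,
      Ktilde_one m hm]
    rw [show (-(1:ℕ):ℤ) = -1 by norm_num, zpow_neg, zpow_one]
    field_simp
    push_cast
    ring
  | succ l hl ih =>
    intro hlm x hx
    have hq : (0:ℝ) < ‖x‖^2 := by
      have : 0 < ‖x‖ := norm_pos_iff.mpr hx
      positivity
    have hmem : {y : EuclideanSpace ℝ (Fin (2*m)) | y ≠ 0} ∈ 𝓝 x :=
      isOpen_compl_singleton.mem_nhds hx
    have hstep : iterLap (l+1) (fun y : EuclideanSpace ℝ (Fin (2*m)) => Real.log ‖y‖) x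
        = lap (iterLap l (fun y : EuclideanSpace ℝ (Fin (2*m)) => Real.log ‖y‖)) x := by
      rw [iterLap, Function.iterate_succ_apply', iterLap]
    rw [hstep]
    have hEq : iterLap l (fun y : EuclideanSpace ℝ (Fin (2*m)) => Real.log ‖y‖)
        =ᶠ[𝓝 x] (fun y => Ktilde m l * (‖y‖^2 : ℝ) ^ (-(l:ℤ))) := by
      filter_upwards [hmem] with y hy
      exact ih (by omega) y hy
    rw [lap_congr hEq]
    set c := Ktilde m l with hc
    have hrad := lap_radial (fun t => c * t ^ (-(l:ℤ)))
        (fun t => c * ((Int.cast (-(l:ℤ)) : ℝ) * t ^ (-(l:ℤ) - 1)))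
        (fun t => c * ((Int.cast (-(l:ℤ)) : ℝ) *
          ((Int.cast (-(l:ℤ) - 1) : ℝ) * t ^ (-(l:ℤ) - 1 - 1))))
        (fun t ht => (hasDerivAt_zpow (-(l:ℤ)) t (Or.inl ht.ne')).const_mul c)
        (fun t ht => ((hasDerivAt_zpow (-(l:ℤ) - 1) t (Or.inl ht.ne')).const_mul
            ((Int.cast (-(l:ℤ)) : ℝ))).const_mul c)
        x hx
    rw [hrad, Ktilde_succ m l hm hl (by omega)]
    have hne : (‖x‖^2 : ℝ) ≠ 0 := hq.ne'
    have hcast : (-(((l+1:ℕ)):ℤ)) = -(l:ℤ) - 1 := by push_cast; ring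
    rw [hcast]
    have z1 : (‖x‖^2 : ℝ) ^ (-(l:ℤ) - 1) = (‖x‖^2 : ℝ) ^ (-(l:ℤ)) / ‖x‖^2 := by
      rw [zpow_sub₀ hne, zpow_one]
    have z2 : (‖x‖^2 : ℝ) ^ (-(l:ℤ) - 1 - 1) = (‖x‖^2 : ℝ) ^ (-(l:ℤ)) / ‖x‖^2 / ‖x‖^2 := by
      rw [zpow_sub₀ hne, zpow_sub₀ hne, zpow_one]
    simp only [z1, z2]
    push_cast
    field_simp
    ring

/-- for `1 ≤ l ≤ m−1` and `x ≠ 0`, `Δ^l(log|x|) = K̃_{m,l} |x|^{−2l}`. -/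
theorem statement11 (m : ℕ) (hm : 2 ≤ m) (l : ℕ) (hl1 : 1 ≤ l) (hlm : l ≤ m - 1)
    (x : EuclideanSpace ℝ (Fin (2*m))) (hx : x ≠ 0) :
    iterLap l (fun y => Real.log ‖y‖) x = Ktilde m l / ‖x‖^(2*l) := by
  rw [main_aux m hm l hl1 hlm x hx]
  rw [zpow_neg, zpow_natCast, ← pow_mul, div_eq_mul_inv, mul_comm 2 l]
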